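/- Let q be a real number with -1 < q < 1 and let n ≥ 1. Then the real matrix A indexed by the symmetric group S_n, with entries A(σ,τ) = q^{inv(σ τ⁻¹)}, is symmetric and positive definite. -/

import Mathlib

/-- The number of inversions of a permutation `σ` of `{0, …, n-1}`:
the number of pairs `(i, j)` with `i < j` and `σ j < σ i`. -/
def inversions {n : ℕ} (σ : Equiv.Perm (Fin n)) : ℕ :=
  (Finset.univ.filter fun p : Fin n × Fin n => p.1 < p.2 ∧ σ p.2 < σ p.1).card

namespace QInvAux

open Finset

variable {n : ℕ}

/-- The sign (`±1` in `ℝ`) recording whether `σ` inverts the pair `p`. -/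
noncomputable def eps (σ : Equiv.Perm (Fin n)) (p : Fin n × Fin n) : ℝ :=
  if σ p.2 < σ p.1 then -1 else 1

/-- The finset of strictly increasing pairs. -/
def pairs (n : ℕ) : Finset (Fin n × Fin n) :=
  Finset.univ.filter fun p : Fin n × Fin n => p.1 < p.2

lemma eps_mul_self (σ : Equiv.Perm (Fin n)) (p : Fin n × Fin n) :
    eps σ p * eps σ p = 1 := by
  unfold eps; split <;> norm_num

lemma eps_eq_or (σ : Equiv.Perm (Fin n)) (p : Fin n × Fin n) :
    eps σ p = 1 ∨ eps σ p = -1 := by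
  unfold eps; split <;> simp

lemma eps_eq_of_iff {σ τ : Equiv.Perm (Fin n)} {p : Fin n × Fin n}
    (h : σ p.2 < σ p.1 ↔ τ p.2 < τ p.1) : eps σ p = eps τ p := by
  unfold eps
  by_cases h1 : σ p.2 < σ p.1
  · rw [if_pos h1, if_pos (h.mp h1)]
  · rw [if_neg h1, if_neg (fun h2 => h1 (h.mpr h2))]

lemma eps_mul_of_not_iff {σ τ : Equiv.Perm (Fin n)} {p : Fin n × Fin n}
    (h : ¬(σ p.2 < σ p.1 ↔ τ p.2 < τ p.1)) : eps σ p * eps τ p = -1 := by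
  unfold eps
  by_cases h1 : σ p.2 < σ p.1 <;> by_cases h2 : τ p.2 < τ p.1
  · exact absurd (iff_of_true h1 h2) h
  · rw [if_pos h1, if_neg h2]; norm_num
  · rw [if_neg h1, if_pos h2]; norm_num
  · exact absurd (iff_of_false h1 h2) h

/-- Step 1: `inversions (σ * τ⁻¹)` counts ordered pairs on which `τ` increases and
`σ` decreases. -/
lemma inversions_mul_inv_eq (σ τ : Equiv.Perm (Fin n)) :
    inversions (σ * τ⁻¹)
      = (Finset.univ.filter fun p : Fin n × Fin n =>
          τ p.1 < τ p.2 ∧ σ p.2 < σ p.1).card := by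
  unfold inversions
  refine Finset.card_bij' (fun p _ => (τ⁻¹ p.1, τ⁻¹ p.2)) (fun p _ => (τ p.1, τ p.2))
    ?_ ?_ ?_ ?_
  · intro p hp
    simp only [mem_filter, mem_univ, true_and, Equiv.Perm.mul_apply] at hp ⊢
    simpa using (Finset.mem_filter.mp hp).2
  · intro p hp
    simp only [mem_filter, mem_univ, true_and, Equiv.Perm.mul_apply] at hp ⊢
    exact Finset.mem_filter.mpr ⟨mem_univ _, by simpa using hp⟩
  · intro p hp; simp
  · intro p hp; simp

/-- Step 2: count by unordered (sorted) pairs of disagreement. -/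
lemma card_ordered_eq_card_disagree (σ τ : Equiv.Perm (Fin n)) :
    (Finset.univ.filter fun p : Fin n × Fin n =>
        τ p.1 < τ p.2 ∧ σ p.2 < σ p.1).card
      = ((pairs n).filter fun p => ¬(σ p.2 < σ p.1 ↔ τ p.2 < τ p.1)).card := by
  refine Finset.card_bij' (fun p _ => if p.1 < p.2 then p else p.swap)
    (fun p _ => if τ p.1 < τ p.2 then p else p.swap) ?_ ?_ ?_ ?_
  · intro p hp
    simp only [mem_filter, mem_univ, true_and] at hp
    obtain ⟨ht, hs⟩ := hp
    have hne : p.1 ≠ p.2 := fun h => lt_irrefl _ (h ▸ ht)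
    by_cases h12 : p.1 < p.2
    · rw [if_pos h12]
      simp only [mem_filter, pairs, mem_univ, true_and]
      exact ⟨h12, fun hiff => absurd (hiff.mp hs) (asymm ht)⟩
    · rw [if_neg h12]
      have h21 : p.2 < p.1 := (hne.symm).lt_of_le (le_of_not_gt h12)
      simp only [mem_filter, pairs, mem_univ, true_and, Prod.fst_swap, Prod.snd_swap]
      refine ⟨h21, fun hiff => ?_⟩
      exact absurd (hiff.mpr ht) (asymm hs)
  · intro p hp
    simp only [mem_filter, pairs, mem_univ, true_and] at hp
    obtain ⟨h12, hdis⟩ := hp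
    have hne : p.1 ≠ p.2 := ne_of_lt h12
    by_cases hsig : σ p.2 < σ p.1
    · have ht : ¬ τ p.2 < τ p.1 := fun h2 => hdis (iff_of_true hsig h2)
      have ht' : τ p.1 < τ p.2 := by
        rcases lt_trichotomy (τ p.1) (τ p.2) with h | h | h
        · exact h
        · exact absurd (τ.injective h) hne
        · exact absurd h ht
      rw [if_pos ht']
      simp only [mem_filter, mem_univ, true_and]
      exact ⟨ht', hsig⟩
    · have ht : τ p.2 < τ p.1 := by
        by_contra h2
        exact hdis (iff_of_false hsig h2)
      have hs' : σ p.1 < σ p.2 := by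
        rcases lt_trichotomy (σ p.1) (σ p.2) with h | h | h
        · exact h
        · exact absurd (σ.injective h) hne
        · exact absurd h hsig
      have : ¬ τ p.1 < τ p.2 := asymm ht
      rw [if_neg this]
      simp only [mem_filter, mem_univ, true_and, Prod.fst_swap, Prod.snd_swap]
      exact ⟨ht, hs'⟩
  · intro p hp
    simp only [mem_filter, mem_univ, true_and] at hp
    obtain ⟨ht, _⟩ := hp
    by_cases h12 : p.1 < p.2
    · rw [if_pos h12, if_pos ht]
    · rw [if_neg h12]
      have : ¬ τ p.swap.1 < τ p.swap.2 := by
        simp only [Prod.fst_swap, Prod.snd_swap]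
        exact asymm ht
      rw [if_neg this, Prod.swap_swap]
  · intro p hp
    simp only [mem_filter, pairs, mem_univ, true_and] at hp
    obtain ⟨h12, _⟩ := hp
    by_cases ht : τ p.1 < τ p.2
    · rw [if_pos ht, if_pos h12]
    · rw [if_neg ht]
      have : ¬ p.swap.1 < p.swap.2 := by
        simp only [Prod.fst_swap, Prod.snd_swap]
        exact asymm h12
      rw [if_neg this, Prod.swap_swap]

/-- The key product formula. -/
lemma pow_inversions_eq (q : ℝ) (σ τ : Equiv.Perm (Fin n)) :
    q ^ inversions (σ * τ⁻¹)
      = ∏ p ∈ pairs n, ((1 + q) / 2 + (1 - q) / 2 * (eps σ p * eps τ p)) := by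
  classical
  rw [inversions_mul_inv_eq, card_ordered_eq_card_disagree]
  rw [← Finset.prod_filter_mul_prod_filter_not (pairs n)
      (fun p => ¬(σ p.2 < σ p.1 ↔ τ p.2 < τ p.1))]
  have h1 : ∀ p ∈ (pairs n).filter (fun p => ¬(σ p.2 < σ p.1 ↔ τ p.2 < τ p.1)),
      (1 + q) / 2 + (1 - q) / 2 * (eps σ p * eps τ p) = q := by
    intro p hp
    rw [mem_filter] at hp
    rw [eps_mul_of_not_iff hp.2]; ring
  have h2 : ∀ p ∈ (pairs n).filter (fun p => ¬¬(σ p.2 < σ p.1 ↔ τ p.2 < τ p.1)),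
      (1 + q) / 2 + (1 - q) / 2 * (eps σ p * eps τ p) = 1 := by
    intro p hp
    rw [mem_filter] at hp
    rw [eps_eq_of_iff (not_not.mp hp.2), eps_mul_self]; ring
  rw [Finset.prod_congr rfl h1, Finset.prod_congr rfl h2, Finset.prod_const,
    Finset.prod_const, one_pow, mul_one]

/-- A permutation is determined by its inversion signs. -/
lemma strictMono_aux {σ ρ : Equiv.Perm (Fin n)}
    (key : ∀ i j : Fin n, i < j → (σ j < σ i ↔ ρ j < ρ i)) :
    StrictMono (fun a => σ (ρ⁻¹ a)) := by
  intro a b hab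
  show σ (ρ⁻¹ a) < σ (ρ⁻¹ b)
  have hρ : ρ (ρ⁻¹ a) < ρ (ρ⁻¹ b) := by
    rw [(Equiv.Perm.eq_inv_iff_eq.mp rfl : ρ (ρ⁻¹ a) = a), (Equiv.Perm.eq_inv_iff_eq.mp rfl : ρ (ρ⁻¹ b) = b)]; exact hab
  have hij : ρ⁻¹ a ≠ ρ⁻¹ b := by
    intro h; rw [h] at hρ; exact lt_irrefl _ hρ
  rcases lt_trichotomy (ρ⁻¹ a) (ρ⁻¹ b) with h | h | h
  · have hiff := key _ _ h
    have hn : ¬ σ (ρ⁻¹ b) < σ (ρ⁻¹ a) := fun hc => asymm hρ (hiff.mp hc)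
    have hne : σ (ρ⁻¹ a) ≠ σ (ρ⁻¹ b) := fun hc => hij (σ.injective hc)
    exact hne.lt_of_le (le_of_not_gt hn)
  · exact absurd h hij
  · exact (key _ _ h).mpr hρ

lemma perm_eq_of_eps_eq {σ ρ : Equiv.Perm (Fin n)}
    (h : ∀ p ∈ pairs n, eps σ p = eps ρ p) : σ = ρ := by
  have key : ∀ i j : Fin n, i < j → (σ j < σ i ↔ ρ j < ρ i) := by
    intro i j hij
    have hmem : (i, j) ∈ pairs n := by simp [pairs, hij]
    have := h (i, j) hmem
    unfold eps at this
    by_cases h1 : σ j < σ i <;> by_cases h2 : ρ j < ρ i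
    · exact iff_of_true h1 h2
    · rw [if_pos h1, if_neg h2] at this; norm_num at this
    · rw [if_neg h1, if_pos h2] at this; norm_num at this
    · exact iff_of_false h1 h2
  have sm1 : StrictMono (fun a => σ (ρ⁻¹ a)) := strictMono_aux key
  have sm2 : StrictMono (fun a => ρ (σ⁻¹ a)) :=
    strictMono_aux (fun i j hij => (key i j hij).symm)
  have h1 : ∀ a : Fin n, a ≤ σ (ρ⁻¹ a) := fun a =>
    @StrictMono.le_apply (Fin n) _ (inferInstanceAs (WellFoundedLT (Fin n))) _ sm1 a
  have h2 : ∀ a : Fin n, a ≤ ρ (σ⁻¹ a) := fun a =>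
    @StrictMono.le_apply (Fin n) _ (inferInstanceAs (WellFoundedLT (Fin n))) _ sm2 a
  have hfix : ∀ a : Fin n, σ (ρ⁻¹ a) = a := by
    intro a
    have hb := h2 (σ (ρ⁻¹ a))
    rw [(Equiv.Perm.inv_eq_iff_eq.mpr rfl : σ⁻¹ (σ (ρ⁻¹ a)) = ρ⁻¹ a), (Equiv.Perm.eq_inv_iff_eq.mp rfl : ρ (ρ⁻¹ a) = a)] at hb
    exact le_antisymm hb (h1 a)
  refine Equiv.ext fun i => ?_
  have := hfix (ρ i)
  rwa [(Equiv.Perm.inv_eq_iff_eq.mpr rfl : ρ⁻¹ (ρ i) = i)] at this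

/-- Walsh character associated to a subset of pairs (complement convention). -/
noncomputable def W (t : Finset (Fin n × Fin n)) (σ : Equiv.Perm (Fin n)) : ℝ :=
  ∏ p ∈ pairs n \ t, eps σ p

/-- Expansion of the product kernel as a sum over subsets. -/
lemma prod_expand (a b : ℝ) (σ τ : Equiv.Perm (Fin n)) :
    ∏ p ∈ pairs n, (a + b * (eps σ p * eps τ p))
      = ∑ t ∈ (pairs n).powerset,
          (a ^ t.card * b ^ (pairs n \ t).card) * (W t σ * W t τ) := by
  classical
  rw [Finset.prod_add]
  refine Finset.sum_congr rfl fun t ht => ?_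
  rw [Finset.prod_const]
  unfold W
  rw [Finset.prod_mul_distrib]
  rw [Finset.prod_mul_distrib, Finset.prod_const]
  ring

/-- Dirac delta via the Walsh kernel. -/
lemma delta_eq (σ ρ : Equiv.Perm (Fin n)) :
    ∏ p ∈ pairs n, ((1 : ℝ) / 2 + (1 / 2) * (eps σ p * eps ρ p))
      = if σ = ρ then 1 else 0 := by
  by_cases h : σ = ρ
  · subst h
    rw [if_pos rfl]
    refine Finset.prod_eq_one fun p _ => ?_
    rw [eps_mul_self]; norm_num
  · rw [if_neg h]
    obtain ⟨p, hp, hps⟩ : ∃ p ∈ pairs n, eps σ p ≠ eps ρ p := by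
      by_contra hc
      push_neg at hc
      exact h (perm_eq_of_eps_eq hc)
    refine Finset.prod_eq_zero hp ?_
    rcases eps_eq_or σ p with h1 | h1 <;> rcases eps_eq_or ρ p with h2 | h2
    · exact absurd (h1.trans h2.symm) hps
    · rw [h1, h2]; norm_num
    · rw [h1, h2]; norm_num
    · exact absurd (h1.trans h2.symm) hps

/-- The quadratic form expands as a nonnegative combination of squares. -/
lemma quad_expand (a b : ℝ) (x : Equiv.Perm (Fin n) → ℝ) :
    ∑ σ : Equiv.Perm (Fin n),
        x σ * ∑ τ : Equiv.Perm (Fin n),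
          (∏ p ∈ pairs n, (a + b * (eps σ p * eps τ p))) * x τ
      = ∑ t ∈ (pairs n).powerset,
          (a ^ t.card * b ^ (pairs n \ t).card) *
            (∑ σ : Equiv.Perm (Fin n), x σ * W t σ) ^ 2 := by
  classical
  have h1 : ∀ σ : Equiv.Perm (Fin n),
      ∑ τ : Equiv.Perm (Fin n),
          (∏ p ∈ pairs n, (a + b * (eps σ p * eps τ p))) * x τ
        = ∑ t ∈ (pairs n).powerset,
            ((a ^ t.card * b ^ (pairs n \ t).card) * W t σ) *
              ∑ τ : Equiv.Perm (Fin n), x τ * W t τ := by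
    intro σ
    calc ∑ τ : Equiv.Perm (Fin n),
            (∏ p ∈ pairs n, (a + b * (eps σ p * eps τ p))) * x τ
        = ∑ τ : Equiv.Perm (Fin n), ∑ t ∈ (pairs n).powerset,
            ((a ^ t.card * b ^ (pairs n \ t).card) * (W t σ * W t τ)) * x τ := by
          refine Finset.sum_congr rfl fun τ _ => ?_
          rw [prod_expand, Finset.sum_mul]
      _ = ∑ t ∈ (pairs n).powerset, ∑ τ : Equiv.Perm (Fin n),
            ((a ^ t.card * b ^ (pairs n \ t).card) * (W t σ * W t τ)) * x τ :=
          Finset.sum_comm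
      _ = ∑ t ∈ (pairs n).powerset,
            ((a ^ t.card * b ^ (pairs n \ t).card) * W t σ) *
              ∑ τ : Equiv.Perm (Fin n), x τ * W t τ := by
          refine Finset.sum_congr rfl fun t _ => ?_
          rw [Finset.mul_sum]
          refine Finset.sum_congr rfl fun τ _ => ?_
          ring
  calc ∑ σ : Equiv.Perm (Fin n),
          x σ * ∑ τ : Equiv.Perm (Fin n),
            (∏ p ∈ pairs n, (a + b * (eps σ p * eps τ p))) * x τ
      = ∑ σ : Equiv.Perm (Fin n), ∑ t ∈ (pairs n).powerset,
          x σ * (((a ^ t.card * b ^ (pairs n \ t).card) * W t σ) *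
            ∑ τ : Equiv.Perm (Fin n), x τ * W t τ) := by
        refine Finset.sum_congr rfl fun σ _ => ?_
        rw [h1 σ, Finset.mul_sum]
    _ = ∑ t ∈ (pairs n).powerset, ∑ σ : Equiv.Perm (Fin n),
          x σ * (((a ^ t.card * b ^ (pairs n \ t).card) * W t σ) *
            ∑ τ : Equiv.Perm (Fin n), x τ * W t τ) := Finset.sum_comm
    _ = ∑ t ∈ (pairs n).powerset,
          (a ^ t.card * b ^ (pairs n \ t).card) *
            (∑ σ : Equiv.Perm (Fin n), x σ * W t σ) ^ 2 := by
        refine Finset.sum_congr rfl fun t _ => ?_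
        calc ∑ σ : Equiv.Perm (Fin n),
                x σ * (((a ^ t.card * b ^ (pairs n \ t).card) * W t σ) *
                  ∑ τ : Equiv.Perm (Fin n), x τ * W t τ)
            = ∑ σ : Equiv.Perm (Fin n),
                (x σ * W t σ) * ((a ^ t.card * b ^ (pairs n \ t).card) *
                  ∑ τ : Equiv.Perm (Fin n), x τ * W t τ) :=
              Finset.sum_congr rfl fun σ _ => by ring
          _ = (∑ σ : Equiv.Perm (Fin n), x σ * W t σ) *
                ((a ^ t.card * b ^ (pairs n \ t).card) *
                  ∑ τ : Equiv.Perm (Fin n), x τ * W t τ) :=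
              (Finset.sum_mul _ _ _).symm
          _ = (a ^ t.card * b ^ (pairs n \ t).card) *
                (∑ σ : Equiv.Perm (Fin n), x σ * W t σ) ^ 2 := by
              rw [sq]; ring

end QInvAux

theorem q_inversion_matrix_posDef (q : ℝ) (hq : -1 < q ∧ q < 1) (n : ℕ) (hn : 1 ≤ n)
    (A : Matrix (Equiv.Perm (Fin n)) (Equiv.Perm (Fin n)) ℝ)
    (hA : ∀ σ τ : Equiv.Perm (Fin n), A σ τ = q ^ inversions (σ * τ⁻¹)) :
    A.IsSymm ∧ A.PosDef := by
  classical
  open QInvAux Finset in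
  obtain ⟨hq1, hq2⟩ := hq
  set a : ℝ := (1 + q) / 2 with ha_def
  set b : ℝ := (1 - q) / 2 with hb_def
  have ha : 0 < a := by rw [ha_def]; linarith
  have hb : 0 < b := by rw [hb_def]; linarith
  have hA' : ∀ σ τ : Equiv.Perm (Fin n),
      A σ τ = ∏ p ∈ pairs n, (a + b * (eps σ p * eps τ p)) := by
    intro σ τ
    rw [hA, pow_inversions_eq]
  have hsymm : ∀ σ τ : Equiv.Perm (Fin n), A σ τ = A τ σ := by
    intro σ τ
    rw [hA' σ τ, hA' τ σ]
    refine Finset.prod_congr rfl fun p _ => ?_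
    ring
  have hAsymm : A.IsSymm := by
    ext σ τ
    rw [Matrix.transpose_apply]
    exact hsymm τ σ
  refine ⟨hAsymm, Matrix.posDef_iff_dotProduct_mulVec.mpr ⟨?_, ?_⟩⟩
  · -- Hermitian
    ext σ τ
    rw [Matrix.conjTranspose_apply]
    rw [star_trivial]
    exact hsymm τ σ
  · intro x hx
    have hdot : dotProduct (star x) (A.mulVec x)
        = ∑ σ : Equiv.Perm (Fin n), x σ * ∑ τ : Equiv.Perm (Fin n), A σ τ * x τ := by
      simp [dotProduct, Matrix.mulVec]
    rw [hdot]
    have hrw : ∑ σ : Equiv.Perm (Fin n), x σ * ∑ τ : Equiv.Perm (Fin n), A σ τ * x τ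
        = ∑ t ∈ (pairs n).powerset,
            (a ^ t.card * b ^ (pairs n \ t).card) *
              (∑ σ : Equiv.Perm (Fin n), x σ * W t σ) ^ 2 := by
      rw [← quad_expand a b x]
      refine Finset.sum_congr rfl fun σ _ => ?_
      congr 1
      refine Finset.sum_congr rfl fun τ _ => ?_
      rw [hA']
    rw [hrw]
    -- each coefficient is positive
    have hcoef : ∀ t ∈ (pairs n).powerset, 0 < a ^ t.card * b ^ (pairs n \ t).card :=
      fun t _ => mul_pos (pow_pos ha _) (pow_pos hb _)
    have hterm : ∀ t ∈ (pairs n).powerset,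
        0 ≤ (a ^ t.card * b ^ (pairs n \ t).card) *
          (∑ σ : Equiv.Perm (Fin n), x σ * W t σ) ^ 2 :=
      fun t ht => mul_nonneg (le_of_lt (hcoef t ht)) (sq_nonneg _)
    rcases (Finset.sum_nonneg hterm).lt_or_eq with hlt | heq
    · exact hlt
    · -- all terms are zero, derive x = 0, contradiction
      exfalso
      have hzero : ∀ t ∈ (pairs n).powerset,
          (a ^ t.card * b ^ (pairs n \ t).card) *
            (∑ σ : Equiv.Perm (Fin n), x σ * W t σ) ^ 2 = 0 :=
        (Finset.sum_eq_zero_iff_of_nonneg hterm).mp heq.symm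
      have hX : ∀ t ∈ (pairs n).powerset,
          (∑ σ : Equiv.Perm (Fin n), x σ * W t σ) = 0 := by
        intro t ht
        have := hzero t ht
        have h2 := (mul_eq_zero.mp this).resolve_left (ne_of_gt (hcoef t ht))
        exact sq_eq_zero_iff.mp h2
      apply hx
      funext ρ
      have hdelta : x ρ = ∑ σ : Equiv.Perm (Fin n),
          x σ * ∏ p ∈ pairs n, ((1 : ℝ) / 2 + (1 / 2) * (eps σ p * eps ρ p)) := by
        rw [show (∑ σ : Equiv.Perm (Fin n),
            x σ * ∏ p ∈ pairs n, ((1 : ℝ) / 2 + (1 / 2) * (eps σ p * eps ρ p)))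
          = ∑ σ : Equiv.Perm (Fin n), if σ = ρ then x σ else 0 from
            Finset.sum_congr rfl fun σ _ => by
              rw [delta_eq]
              split <;> simp]
        rw [Finset.sum_ite_eq' Finset.univ ρ x]
        simp
      have hexp : ∑ σ : Equiv.Perm (Fin n),
          x σ * ∏ p ∈ pairs n, ((1 : ℝ) / 2 + (1 / 2) * (eps σ p * eps ρ p))
        = ∑ t ∈ (pairs n).powerset,
            (((1 : ℝ) / 2) ^ t.card * ((1 : ℝ) / 2) ^ (pairs n \ t).card * W t ρ) *
              ∑ σ : Equiv.Perm (Fin n), x σ * W t σ := by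
        calc ∑ σ : Equiv.Perm (Fin n),
              x σ * ∏ p ∈ pairs n, ((1 : ℝ) / 2 + (1 / 2) * (eps σ p * eps ρ p))
            = ∑ σ : Equiv.Perm (Fin n), ∑ t ∈ (pairs n).powerset,
                x σ * ((((1 : ℝ) / 2) ^ t.card * ((1 : ℝ) / 2) ^ (pairs n \ t).card)
                  * (W t σ * W t ρ)) := by
              refine Finset.sum_congr rfl fun σ _ => ?_
              rw [prod_expand, Finset.mul_sum]
          _ = ∑ t ∈ (pairs n).powerset, ∑ σ : Equiv.Perm (Fin n),
                x σ * ((((1 : ℝ) / 2) ^ t.card * ((1 : ℝ) / 2) ^ (pairs n \ t).card)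
                  * (W t σ * W t ρ)) := Finset.sum_comm
          _ = ∑ t ∈ (pairs n).powerset,
                (((1 : ℝ) / 2) ^ t.card * ((1 : ℝ) / 2) ^ (pairs n \ t).card * W t ρ) *
                  ∑ σ : Equiv.Perm (Fin n), x σ * W t σ := by
              refine Finset.sum_congr rfl fun t _ => ?_
              rw [Finset.mul_sum]
              refine Finset.sum_congr rfl fun σ _ => ?_
              ring
      rw [Pi.zero_apply, hdelta, hexp]
      exact Finset.sum_eq_zero fun t ht => by rw [hX t ht, mul_zero]
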